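/- Let f_w be an l-layer GCN (l ≥ 2) with weight matrices W_1,…,W_l, but with an arbitrary matrix P ∈ ℝ^{n×n} in place of the graph Laplacian, and input graph G with feature matrix X ∈ ℝ^{n×h_0}. Then the network output satisfies ‖f_w(G)‖₂ ≤ (1/√n) · ‖X‖_F · ‖P‖₂^{l−1} · ∏_{i=1}^l ‖W_i‖₂. -/

import Mathlib

open MeasureTheory Matrix Finset

noncomputable section

/-- Spectral norm of a real matrix: the operator norm induced by Euclidean vector norms. -/
def specNorm {m n : Type*} [Fintype m] [Fintype n] [DecidableEq n] (A : Matrix m n ℝ) : ℝ :=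
  ‖LinearMap.toContinuousLinearMap (Matrix.toEuclideanLin A)‖

/-- Frobenius norm of a real matrix. -/
def frobNorm {m n : Type*} [Fintype m] [Fintype n] (A : Matrix m n ℝ) : ℝ :=
  Real.sqrt (∑ i, ∑ j, (A i j) ^ 2)

/-- Euclidean norm of a finite real vector. -/
def euclNorm {n : Type*} [Fintype n] (v : n → ℝ) : ℝ :=
  Real.sqrt (∑ i, (v i) ^ 2)

/-- Entrywise ReLU on a matrix. -/
def relu {m k : Type*} (M : Matrix m k ℝ) : Matrix m k ℝ := M.map (fun x => max x 0)

/-- Node representations of a GCN: `H_0 = X`, `H_{k+1} = σ(P H_k W_{k+1})`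
(we index weights from `0`, so `W k` is the paper's `W_{k+1}`). -/
def gcnRep {n : ℕ} (d : ℕ → ℕ) (W : ∀ k : ℕ, Matrix (Fin (d k)) (Fin (d (k + 1))) ℝ)
    (P : Matrix (Fin n) (Fin n) ℝ) (X : Matrix (Fin n) (Fin (d 0)) ℝ) :
    (k : ℕ) → Matrix (Fin n) (Fin (d k)) ℝ
  | 0 => X
  | (k + 1) => relu (P * gcnRep d W P X k * W k)

/-- Output (readout) of an `l`-layer GCN: `f_w(G) = H_l = (1/n) 1_n H_{l-1} W_l`. -/
def gcnOut {n : ℕ} (d : ℕ → ℕ) (W : ∀ k : ℕ, Matrix (Fin (d k)) (Fin (d (k + 1))) ℝ)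
    (P : Matrix (Fin n) (Fin n) ℝ) (X : Matrix (Fin n) (Fin (d 0)) ℝ) :
    (l : ℕ) → Fin (d l) → ℝ
  | 0 => fun _ => 0
  | (l + 1) => fun j => (n : ℝ)⁻¹ * ∑ i, (gcnRep d W P X l * W l) i j

lemma specNorm_nonneg {m n : Type*} [Fintype m] [Fintype n] [DecidableEq n]
    (A : Matrix m n ℝ) : 0 ≤ specNorm A := norm_nonneg _

lemma frobNorm_nonneg {m n : Type*} [Fintype m] [Fintype n] (A : Matrix m n ℝ) :
    0 ≤ frobNorm A := Real.sqrt_nonneg _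

-- vector bound
lemma mulVec_bound {m n : Type*} [Fintype m] [Fintype n] [DecidableEq n]
    (A : Matrix m n ℝ) (x : n → ℝ) :
    ∑ i, (A.mulVec x i) ^ 2 ≤ specNorm A ^ 2 * ∑ j, (x j) ^ 2 := by
  have h := (LinearMap.toContinuousLinearMap (Matrix.toEuclideanLin A)).le_opNorm
    ((WithLp.equiv 2 (n → ℝ)).symm x)
  have hy : ‖(WithLp.equiv 2 (n → ℝ)).symm x‖ = Real.sqrt (∑ j, (x j) ^ 2) := by
    rw [EuclideanSpace.norm_eq]
    congr 1
    simp [Real.norm_eq_abs, sq_abs]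
  have hx : (LinearMap.toContinuousLinearMap (Matrix.toEuclideanLin A))
      ((WithLp.equiv 2 (n → ℝ)).symm x) = (WithLp.equiv 2 (m → ℝ)).symm (A.mulVec x) := by
    simp [LinearMap.coe_toContinuousLinearMap', Matrix.toEuclideanLin_toLp]
  have hz : ‖(WithLp.equiv 2 (m → ℝ)).symm (A.mulVec x)‖
      = Real.sqrt (∑ i, (A.mulVec x i) ^ 2) := by
    rw [EuclideanSpace.norm_eq]
    congr 1
    simp [Real.norm_eq_abs, sq_abs]
  rw [hx, hz, hy] at h
  have h2 : Real.sqrt (∑ i, (A.mulVec x i) ^ 2) ^ 2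
      ≤ (specNorm A * Real.sqrt (∑ j, (x j) ^ 2)) ^ 2 := by
    apply pow_le_pow_left₀ (Real.sqrt_nonneg _) h
  rw [Real.sq_sqrt (by positivity)] at h2
  calc ∑ i, (A.mulVec x i) ^ 2 ≤ (specNorm A * Real.sqrt (∑ j, (x j) ^ 2)) ^ 2 := h2
    _ = specNorm A ^ 2 * ∑ j, (x j) ^ 2 := by
        rw [mul_pow, Real.sq_sqrt (by positivity)]

lemma frob_mul_left {m n k : Type*} [Fintype m] [Fintype n] [Fintype k] [DecidableEq n]
    (A : Matrix m n ℝ) (B : Matrix n k ℝ) :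
    frobNorm (A * B) ≤ specNorm A * frobNorm B := by
  have key : ∑ i, ∑ j, ((A * B) i j) ^ 2 ≤ specNorm A ^ 2 * ∑ i, ∑ j, (B i j) ^ 2 := by
    rw [Finset.sum_comm, Finset.sum_comm (f := fun i j => (B i j)^2), Finset.mul_sum]
    apply Finset.sum_le_sum
    intro j _
    have := mulVec_bound A (fun i => B i j)
    simpa [Matrix.mulVec, Matrix.mul_apply, dotProduct] using this
  have : frobNorm (A * B) ≤ Real.sqrt (specNorm A ^ 2 * ∑ i, ∑ j, (B i j) ^ 2) :=
    Real.sqrt_le_sqrt key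
  calc frobNorm (A * B) ≤ Real.sqrt (specNorm A ^ 2 * ∑ i, ∑ j, (B i j) ^ 2) := this
    _ = specNorm A * frobNorm B := by
        rw [Real.sqrt_mul (by positivity), Real.sqrt_sq (specNorm_nonneg A)]; rfl

lemma frobNorm_transpose {m n : Type*} [Fintype m] [Fintype n] (A : Matrix m n ℝ) :
    frobNorm Aᵀ = frobNorm A := by
  unfold frobNorm
  rw [Finset.sum_comm]
  rfl

section L2
open scoped Matrix.Norms.L2Operator

lemma specNorm_eq_l2 {m n : Type*} [Fintype m] [Fintype n] [DecidableEq n]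
    (A : Matrix m n ℝ) : specNorm A = ‖A‖ := rfl

lemma specNorm_transpose {m n : Type*} [Fintype m] [Fintype n] [DecidableEq m] [DecidableEq n]
    (A : Matrix m n ℝ) : specNorm Aᵀ = specNorm A := by
  rw [specNorm_eq_l2, specNorm_eq_l2]
  have := Matrix.l2_opNorm_conjTranspose A
  simpa [Matrix.conjTranspose_eq_transpose_of_trivial] using this

end L2

lemma frob_mul_right {m n k : Type*} [Fintype m] [Fintype n] [Fintype k]
    [DecidableEq n] [DecidableEq k]
    (A : Matrix m n ℝ) (B : Matrix n k ℝ) :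
    frobNorm (A * B) ≤ frobNorm A * specNorm B := by
  calc frobNorm (A * B) = frobNorm (A * B)ᵀ := (frobNorm_transpose _).symm
    _ = frobNorm (Bᵀ * Aᵀ) := by rw [Matrix.transpose_mul]
    _ ≤ specNorm Bᵀ * frobNorm Aᵀ := frob_mul_left _ _
    _ = frobNorm A * specNorm B := by rw [specNorm_transpose, frobNorm_transpose, mul_comm]

lemma frob_relu_le {m k : Type*} [Fintype m] [Fintype k] (M : Matrix m k ℝ) :
    frobNorm (M.map (fun x => max x 0)) ≤ frobNorm M := by
  apply Real.sqrt_le_sqrt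
  apply Finset.sum_le_sum
  intro i _
  apply Finset.sum_le_sum
  intro j _
  simp only [Matrix.map_apply]
  rcases le_or_gt (M i j) 0 with h | h
  · rw [max_eq_right h]; simpa using sq_nonneg (M i j)
  · rw [max_eq_left h.le]

def gcnRep' {n : ℕ} (d : ℕ → ℕ) (W : ∀ k : ℕ, Matrix (Fin (d k)) (Fin (d (k + 1))) ℝ)
    (P : Matrix (Fin n) (Fin n) ℝ) (X : Matrix (Fin n) (Fin (d 0)) ℝ) :
    (k : ℕ) → Matrix (Fin n) (Fin (d k)) ℝ
  | 0 => X
  | (k + 1) => (P * gcnRep' d W P X k * W k).map (fun x => max x 0)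

lemma gcnRep_bound {n : ℕ} (d : ℕ → ℕ) (W : ∀ k : ℕ, Matrix (Fin (d k)) (Fin (d (k + 1))) ℝ)
    (P : Matrix (Fin n) (Fin n) ℝ) (X : Matrix (Fin n) (Fin (d 0)) ℝ) (k : ℕ) :
    frobNorm (gcnRep' d W P X k) ≤
      frobNorm X * specNorm P ^ k * ∏ i ∈ Finset.range k, specNorm (W i) := by
  induction k with
  | zero => simp [gcnRep']
  | succ k ih =>
      calc frobNorm (gcnRep' d W P X (k+1))
          ≤ frobNorm (P * gcnRep' d W P X k * W k) := frob_relu_le _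
        _ ≤ frobNorm (P * gcnRep' d W P X k) * specNorm (W k) := frob_mul_right _ _
        _ ≤ (specNorm P * frobNorm (gcnRep' d W P X k)) * specNorm (W k) := by
            apply mul_le_mul_of_nonneg_right (frob_mul_left _ _) (specNorm_nonneg _)
        _ ≤ (specNorm P * (frobNorm X * specNorm P ^ k * ∏ i ∈ Finset.range k, specNorm (W i)))
              * specNorm (W k) := by
            apply mul_le_mul_of_nonneg_right _ (specNorm_nonneg _)
            exact mul_le_mul_of_nonneg_left ih (specNorm_nonneg _)
        _ = frobNorm X * specNorm P ^ (k+1) * ∏ i ∈ Finset.range (k+1), specNorm (W i) := by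
            rw [Finset.prod_range_succ]; ring

private theorem gcnOut_norm_le' (n l : ℕ) (hl : 2 ≤ l) (hn : 0 < n) (d : ℕ → ℕ)
    (W : ∀ k : ℕ, Matrix (Fin (d k)) (Fin (d (k + 1))) ℝ)
    (P : Matrix (Fin n) (Fin n) ℝ) (X : Matrix (Fin n) (Fin (d 0)) ℝ) :
    euclNorm (fun j => (n : ℝ)⁻¹ * ∑ i, (gcnRep' d W P X (l-1) * W (l-1)) i j) ≤
      (Real.sqrt n)⁻¹ * frobNorm X * specNorm P ^ (l - 1) *
        ∏ i ∈ Finset.range l, specNorm (W i) := by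
  obtain ⟨m, rfl⟩ : ∃ m, l = m + 1 := ⟨l - 1, by omega⟩
  simp only [Nat.add_sub_cancel]
  set M := gcnRep' d W P X m * W m with hM
  -- step 1: euclNorm of averaged column sums ≤ (√n)⁻¹ * frobNorm M
  have step1 : euclNorm (fun j => (n : ℝ)⁻¹ * ∑ i, M i j) ≤ (Real.sqrt n)⁻¹ * frobNorm M := by
    have h1 : ∀ j, ((n : ℝ)⁻¹ * ∑ i, M i j) ^ 2 ≤ (n:ℝ)⁻¹ * ∑ i, (M i j)^2 := by
      intro j
      have := sq_sum_le_card_mul_sum_sq (α := ℝ) (s := (Finset.univ : Finset (Fin n)))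
        (f := fun i => M i j)
      simp only [Finset.card_univ, Fintype.card_fin] at this
      rw [mul_pow]
      calc ((n : ℝ)⁻¹)^2 * (∑ i, M i j)^2 ≤ ((n:ℝ)⁻¹)^2 * ((n:ℝ) * ∑ i, (M i j)^2) := by
            apply mul_le_mul_of_nonneg_left _ (by positivity)
            exact_mod_cast this
        _ = (n:ℝ)⁻¹ * ((n:ℝ)⁻¹ * (n:ℝ)) * ∑ i, (M i j)^2 := by ring
        _ = (n:ℝ)⁻¹ * ∑ i, (M i j)^2 := by
            rw [inv_mul_cancel₀ (Nat.cast_ne_zero.mpr hn.ne'), mul_one]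
    calc euclNorm (fun j => (n : ℝ)⁻¹ * ∑ i, M i j)
        ≤ Real.sqrt ((n:ℝ)⁻¹ * ∑ j, ∑ i, (M i j)^2) := by
          apply Real.sqrt_le_sqrt
          rw [Finset.mul_sum]
          exact Finset.sum_le_sum (fun j _ => h1 j)
      _ = (Real.sqrt n)⁻¹ * frobNorm M := by
          rw [Real.sqrt_mul (by positivity), Real.sqrt_inv, Finset.sum_comm]
          rfl
  have step2 : frobNorm M ≤ (frobNorm X * specNorm P ^ m * ∏ i ∈ Finset.range m, specNorm (W i))
      * specNorm (W m) := by
    calc frobNorm M ≤ frobNorm (gcnRep' d W P X m) * specNorm (W m) := frob_mul_right _ _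
      _ ≤ _ := mul_le_mul_of_nonneg_right (gcnRep_bound d W P X m) (specNorm_nonneg _)
  calc euclNorm (fun j => (n : ℝ)⁻¹ * ∑ i, M i j) ≤ (Real.sqrt n)⁻¹ * frobNorm M := step1
    _ ≤ (Real.sqrt n)⁻¹ * ((frobNorm X * specNorm P ^ m * ∏ i ∈ Finset.range m, specNorm (W i))
          * specNorm (W m)) := by
        apply mul_le_mul_of_nonneg_left step2 (by positivity)
    _ = (Real.sqrt n)⁻¹ * frobNorm X * specNorm P ^ m *
          ∏ i ∈ Finset.range (m+1), specNorm (W i) := by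
        rw [Finset.prod_range_succ]; ring


lemma gcnRep_eq_gcnRep' {n : ℕ} (d : ℕ → ℕ) (W : ∀ k : ℕ, Matrix (Fin (d k)) (Fin (d (k + 1))) ℝ)
    (P : Matrix (Fin n) (Fin n) ℝ) (X : Matrix (Fin n) (Fin (d 0)) ℝ) (k : ℕ) :
    gcnRep d W P X k = gcnRep' d W P X k := by
  induction k with
  | zero => rfl
  | succ k ih => simp [gcnRep, gcnRep', relu, ih]

/-- Bound on the output of an `l`-layer GCN (with an arbitrary matrix `P` in place of the
graph Laplacian): `‖f_w(G)‖₂ ≤ (1/√n) ‖X‖_F ‖P‖₂^{l-1} ∏_{i=1}^l ‖W_i‖₂`. -/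
theorem gcnOut_norm_le (n l : ℕ) (hl : 2 ≤ l) (hn : 0 < n) (d : ℕ → ℕ)
    (W : ∀ k : ℕ, Matrix (Fin (d k)) (Fin (d (k + 1))) ℝ)
    (P : Matrix (Fin n) (Fin n) ℝ) (X : Matrix (Fin n) (Fin (d 0)) ℝ) :
    euclNorm (gcnOut d W P X l) ≤
      (Real.sqrt n)⁻¹ * frobNorm X * specNorm P ^ (l - 1) *
        ∏ i ∈ Finset.range l, specNorm (W i) := by
  obtain ⟨m, rfl⟩ : ∃ m, l = m + 1 := ⟨l - 1, by omega⟩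
  have h := gcnOut_norm_le' n (m+1) hl hn d W P X
  simp only [Nat.add_sub_cancel] at h ⊢
  have he : gcnOut d W P X (m+1)
      = fun j => (n : ℝ)⁻¹ * ∑ i, (gcnRep' d W P X m * W m) i j := by
    funext j
    simp [gcnOut, gcnRep_eq_gcnRep']
  rw [he]
  exact h

end
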